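/- arXiv:1608.03666 — 2 statements merged into one kernel-verified Lean document; each statement's English description precedes it below -/
import Mathlib

section
/- Let ξ be an ordinal, A : X → Y a bounded linear operator between Banach spaces, and 1 < p < ∞. Then A is ξ-asymptotically uniformly smooth with power type p if and only if t_{ξ,p}(A) < ∞. Moreover, in this case each of the quantities t_{ξ,p}(A) and sup_{σ∈(0,1)} ρ_ξ(σ; A)/σ^p can be majorized by a quantity depending only on the other, p, and ‖A‖. -/
/-!
Common definitions formalizing the notions of Causey, "Power type ξ-asymptotically
uniformly smooth norms": Szlenk derivations and indices, B-trees, weakly null and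
weak*-null collections, the moduli ρ_ξ and δ_ξ^{w*}, the trees Γ_ξ, Γ_{ξ,n}, Γ_{ξ,∞}
with their levels and probability weights, and related quantities.
-/

noncomputable section

open Ordinal Set Metric Filter NormedSpace Pointwise
open scoped Classical ENNReal Topology

universe u v

namespace SzlenkPaper

/-! ### B-trees of finite sequences

Finite sequences in `Λ` are modelled by `List Λ`; `s <+: t` (list prefix) is the
initial segment order `s ⪯ t`, and the proper initial segment order `s ≺ t` is
`s <+: t ∧ s ≠ t`. -/

/-- `B` is a B-tree : a set of nonempty finite sequences which, after adding the
empty sequence, is downward closed under initial segments. -/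
def IsBTree {Λ : Type v} (B : Set (List Λ)) : Prop :=
  [] ∉ B ∧ ∀ t ∈ B, ∀ s : List Λ, s ≠ [] → s <+: t → s ∈ B

/-- The `≺`-maximal members of a set of finite sequences. -/
def maxMembers {Λ : Type v} (B : Set (List Λ)) : Set (List Λ) :=
  {t | t ∈ B ∧ ¬∃ s ∈ B, t <+: s ∧ t ≠ s}

/-- `B' = B \ MAX(B)`, the derived tree. -/
def treeDeriv {Λ : Type v} (B : Set (List Λ)) : Set (List Λ) :=
  {t | t ∈ B ∧ ∃ s ∈ B, t <+: s ∧ t ≠ s}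

/-- Transfinite iterates `B^ζ` of the tree derivation: `B^0 = B`,
`B^{ζ+1} = (B^ζ)'`, with intersections at limit ordinals. -/
def treeIter {Λ : Type v} (B : Set (List Λ)) (o : Ordinal.{0}) : Set (List Λ) :=
  Ordinal.limitRecOn (motive := fun _ => Set (List Λ)) o B (fun _ S => treeDeriv S)
    (fun o' _ f => ⋂ ζ : Set.Iio o', f ζ.1 (Set.mem_Iio.mp ζ.2))

/-- `o(B) = o` : the least ordinal at which the iterated derivation of `B` is empty is `o`. -/
def hasOrder {Λ : Type v} (B : Set (List Λ)) (o : Ordinal.{0}) : Prop :=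
  treeIter B o = ∅ ∧ ∀ ζ : Ordinal.{0}, ζ < o → treeIter B ζ ≠ ∅

/-- The (finite) set of initial segments `s ⪯ t` of `t` which belong to `B`. -/
def branchFinset {Λ : Type v} (B : Set (List Λ)) (t : List Λ) : Finset (List Λ) :=
  t.inits.toFinset.filter fun s => s ∈ B

section WeakTopology

variable {X : Type u} [NormedAddCommGroup X] [NormedSpace ℝ X]

/-- The closure of a set in the weak topology of `X`. -/
def weakClosure (S : Set X) : Set X :=
  ⇑(toWeakSpace ℝ X) ⁻¹' closure (⇑(toWeakSpace ℝ X) '' S)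

/-- The filter of weak neighborhoods of a point of `X`. -/
def weakNhds (x : X) : Filter X :=
  Filter.comap (⇑(toWeakSpace ℝ X)) (𝓝 (toWeakSpace ℝ X x))

/-- The closure of a set of functionals in the weak* topology of `X*`. -/
def wstarClosure (S : Set (StrongDual ℝ X)) : Set (StrongDual ℝ X) :=
  ⇑(StrongDual.toWeakDual (𝕜 := ℝ) (E := X)) ⁻¹'
    closure (⇑(StrongDual.toWeakDual (𝕜 := ℝ) (E := X)) '' S)

/-- The filter of weak* neighborhoods of a functional in `X*`. -/
def wstarNhds (f : StrongDual ℝ X) : Filter (StrongDual ℝ X) :=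
  Filter.comap (⇑(StrongDual.toWeakDual (𝕜 := ℝ) (E := X))) (𝓝 (StrongDual.toWeakDual f))

/-- A set of functionals is weak*-compact if it is compact in the weak* topology. -/
def IsWStarCompact (K : Set (StrongDual ℝ X)) : Prop :=
  IsCompact (⇑(StrongDual.toWeakDual (𝕜 := ℝ) (E := X)) '' K)

/-! ### Szlenk derivations -/

/-- The Szlenk derivation `s_ε(K)`: the points of `K` all of whose weak*
neighborhoods `V` satisfy `diam (V ∩ K) > ε`; by convention `s_ε(K) = K` for `ε ≤ 0`. -/
def szDeriv (ε : ℝ) (K : Set (StrongDual ℝ X)) : Set (StrongDual ℝ X) :=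
  if ε ≤ 0 then K else {f | f ∈ K ∧ ∀ V ∈ wstarNhds f, ε < diam (V ∩ K)}

/-- Transfinite iterates `s_ε^o(K)` of the Szlenk derivation. -/
def szIter (ε : ℝ) (K : Set (StrongDual ℝ X)) (o : Ordinal.{0}) : Set (StrongDual ℝ X) :=
  Ordinal.limitRecOn (motive := fun _ => Set (StrongDual ℝ X)) o K (fun _ S => szDeriv ε S)
    (fun o' _ f => ⋂ ζ : Set.Iio o', f ζ.1 (Set.mem_Iio.mp ζ.2))

/-- `Sz(K) ≤ o`, i.e. for every `ε > 0` the iterated derivation is empty by stage `o`. -/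
def SzLe (K : Set (StrongDual ℝ X)) (o : Ordinal.{0}) : Prop :=
  ∀ ε : ℝ, 0 < ε → szIter ε K o = ∅

/-- `Sz(K) = o`. -/
def SzEq (K : Set (StrongDual ℝ X)) (o : Ordinal.{0}) : Prop :=
  SzLe K o ∧ ∀ ζ : Ordinal.{0}, ζ < o → ∃ ε : ℝ, 0 < ε ∧ szIter ε K ζ ≠ ∅

/-- `s_{ξ,ε}(K) = s_ε^{ω^ξ}(K)`. -/
def szIterXi (ξ : Ordinal.{0}) (ε : ℝ) (K : Set (StrongDual ℝ X)) : Set (StrongDual ℝ X) :=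
  szIter ε K (omega0 ^ ξ)

/-- Iterated application `s_{ξ,ε_1} s_{ξ,ε_2} ⋯ s_{ξ,ε_n}(K)` for a list `[ε_1,…,ε_n]`. -/
def multiDeriv (ξ : Ordinal.{0}) : List ℝ → Set (StrongDual ℝ X) → Set (StrongDual ℝ X)
  | [], K => K
  | e :: l, K => szIterXi ξ e (multiDeriv ξ l K)

/-- `Sz_ξ(K,ε)`: the least `n ∈ ℕ` such that `s_ε^{ω^ξ·n}(K) = ∅` (meaningful when
`Sz(K) ≤ ω^{ξ+1}`, in which case the least such ordinal is a natural number). -/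
def szNat (ξ : Ordinal.{0}) (ε : ℝ) (K : Set (StrongDual ℝ X)) : ℕ :=
  sInf {n : ℕ | szIter ε K (omega0 ^ ξ * n) = ∅}

/-- The ξ-Szlenk power type `p_ξ(K) = limsup_{ε→0⁺} log Sz_ξ(K,ε) / |log ε|`, with
value `∞` when `Sz(K) > ω^{ξ+1}`. -/
def szPower (ξ : Ordinal.{0}) (K : Set (StrongDual ℝ X)) : ℝ≥0∞ :=
  if SzLe K (omega0 ^ (ξ + 1)) then
    Filter.limsup (fun ε : ℝ =>
      ENNReal.ofReal (Real.log (szNat ξ ε K : ℝ) / |Real.log ε|)) (𝓝[>] (0 : ℝ))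
  else ⊤

variable {Y : Type u} [NormedAddCommGroup Y] [NormedSpace ℝ Y]

/-- `A* B_{Y*}`: the image of the closed unit ball of `Y*` under the adjoint of `A`. -/
def adjBall (A : X →L[ℝ] Y) : Set (StrongDual ℝ X) :=
  (fun g : StrongDual ℝ Y => g.comp A) '' Metric.closedBall 0 1

/-- The ξ-Szlenk power type of an operator, `p_ξ(A) = p_ξ(A*B_{Y*})`. -/
def szPowerOp (ξ : Ordinal.{0}) (A : X →L[ℝ] Y) : ℝ≥0∞ :=
  szPower ξ (adjBall A)

/-- The ξ-Szlenk power type of a Banach space, `p_ξ(X) = p_ξ(B_{X*})`. -/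
def szPowerSp (ξ : Ordinal.{0}) (X : Type u) [NormedAddCommGroup X] [NormedSpace ℝ X] : ℝ≥0∞ :=
  szPower ξ (Metric.closedBall (0 : StrongDual ℝ X) 1)

end WeakTopology

section Collections

variable {X Y : Type u} [NormedAddCommGroup X] [NormedSpace ℝ X]
  [NormedAddCommGroup Y] [NormedSpace ℝ Y]

/-- A weakly null collection `(x_t)_{t ∈ B}` : for every ordinal `ζ` and every
`t ∈ (B ∪ {∅})^{ζ+1}`, `0` belongs to the weak closure of `{x_s : s ∈ B^ζ, s⁻ = t}`. -/
def WeaklyNullColl {Λ : Type v} (B : Set (List Λ)) (g : List Λ → X) : Prop :=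
  ∀ ζ : Ordinal.{0}, ∀ t ∈ treeIter (insert [] B) (ζ + 1),
    (0 : X) ∈ weakClosure {x : X | ∃ s ∈ treeIter B ζ, s ≠ [] ∧ s.dropLast = t ∧ x = g s}

/-- A weak*-null collection `(z*_t)_{t ∈ B}` in `Y*`. -/
def WStarNullColl {Λ : Type v} (B : Set (List Λ)) (z : List Λ → StrongDual ℝ Y) : Prop :=
  ∀ ζ : Ordinal.{0}, ∀ t ∈ treeIter (insert [] B) (ζ + 1),
    (0 : StrongDual ℝ Y) ∈ wstarClosure {w : StrongDual ℝ Y | ∃ s ∈ treeIter B ζ, s ≠ [] ∧ s.dropLast = t ∧ w = z s}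

/-- `co(x_s : s ⪯ t, s ∈ B)`, the convex hull of the values along the branch through `t`. -/
def branchHull {Λ : Type v} (B : Set (List Λ)) (g : List Λ → X) (t : List Λ) : Set X :=
  convexHull ℝ {x : X | ∃ s ∈ B, s <+: t ∧ x = g s}

/-! ### Norms and moduli -/

/-- `N` is a norm on `Y`. -/
def IsNormOn (N : Y → ℝ) : Prop :=
  N 0 = 0 ∧ (∀ y : Y, y ≠ 0 → 0 < N y) ∧ (∀ (c : ℝ) (y : Y), N (c • y) = |c| * N y) ∧
    ∀ y z : Y, N (y + z) ≤ N y + N z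

/-- `N` is a norm on `Y` equivalent to the given norm. -/
def IsEquivNorm (N : Y → ℝ) : Prop :=
  IsNormOn N ∧ ∃ c C : ℝ, 0 < c ∧ 0 < C ∧ ∀ y : Y, c * ‖y‖ ≤ N y ∧ N y ≤ C * ‖y‖

/-- `N` is a `2`-equivalent norm on `Y`: `‖y‖/2 ≤ N y ≤ 2‖y‖`. -/
def IsTwoEquivNorm (N : Y → ℝ) : Prop :=
  IsNormOn N ∧ ∀ y : Y, (1 / 2) * ‖y‖ ≤ N y ∧ N y ≤ 2 * ‖y‖

/-- The dual norm on `Y*` of a norm `N` on `Y`. -/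
def dualNormOf (N : Y → ℝ) (g : StrongDual ℝ Y) : ℝ :=
  sSup {r : ℝ | ∃ y : Y, N y ≤ 1 ∧ r = |g y|}

/-- The modulus `ρ_ξ(σ; A : X → (Y,N))` of ξ-asymptotic uniform smoothness of the
operator `A`, where `Y` carries the (equivalent) norm `N`:
`sup inf {N(y + Ax) − 1 : t ∈ B, x ∈ co(x_s : s ⪯ t)}`, the supremum taken over
all `y` in the `N`-unit ball of `Y`, all B-trees `B` with `o(B) = ω^ξ`, and all
weakly null collections `(x_t)_{t ∈ B} ⊆ σ B_X`. -/
def rhoWith (ξ : Ordinal.{0}) (A : X →L[ℝ] Y) (N : Y → ℝ) (σ : ℝ) : ℝ :=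
  sSup {r : ℝ | ∃ y : Y, N y ≤ 1 ∧
    ∃ (Λ : Type (max u 1)) (B : Set (List Λ)) (g : List Λ → X),
      IsBTree B ∧ hasOrder B (omega0 ^ ξ) ∧ WeaklyNullColl B g ∧ (∀ t ∈ B, ‖g t‖ ≤ σ) ∧
      r = sInf {c : ℝ | ∃ t ∈ B, ∃ x ∈ branchHull B g t, c = N (y + A x) - 1}}

/-- `ρ_ξ(σ; A)` with the given norm of `Y`. -/
def rho (ξ : Ordinal.{0}) (A : X →L[ℝ] Y) (σ : ℝ) : ℝ :=
  rhoWith ξ A (fun y => ‖y‖) σ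

/-- `A : X → (Y,N)` is ξ-asymptotically uniformly smooth with power type `p`:
`ρ_ξ(σ;A) ≤ C σ^p` for all `0 < σ ≤ 1`. -/
def AUSWith (ξ : Ordinal.{0}) (A : X →L[ℝ] Y) (N : Y → ℝ) (p : ℝ) : Prop :=
  ∃ C : ℝ, ∀ σ : ℝ, 0 < σ → σ ≤ 1 → rhoWith ξ A N σ ≤ C * σ ^ p

/-- `A : X → (Y,N)` is ξ-asymptotically uniformly smooth with power type `∞`. -/
def AUSInfWith (ξ : Ordinal.{0}) (A : X →L[ℝ] Y) (N : Y → ℝ) : Prop :=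
  ∃ C : ℝ, ∀ (y : Y) (b : ℝ), 0 < b →
    ∀ (Λ : Type (max u 1)) (B : Set (List Λ)) (g : List Λ → X),
      IsBTree B → hasOrder B (omega0 ^ ξ) → WeaklyNullColl B g → (∀ t ∈ B, ‖g t‖ ≤ b) →
      sInf {c : ℝ | ∃ t ∈ B, ∃ x ∈ branchHull B g t, c = N (y + A x)} ≤ max (N y) (C * b)

/-- The set of constants `C > 0` witnessing the quantity `t_{ξ,p}(A)`: for every
`y ∈ Y`, `σ > 0`, every B-tree `B` with `o(B) = ω^ξ` and every weakly null
`(x_t)_{t∈B} ⊆ σ B_X`, `inf {‖y + Ax‖^p} ≤ ‖y‖^p + C σ^p`.  `t_{ξ,p}(A)` itself is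
the infimum of this set. -/
def tConstSet (ξ : Ordinal.{0}) (A : X →L[ℝ] Y) (p : ℝ) : Set ℝ :=
  {C : ℝ | 0 < C ∧ ∀ (y : Y) (σ : ℝ), 0 < σ →
    ∀ (Λ : Type (max u 1)) (B : Set (List Λ)) (g : List Λ → X),
      IsBTree B → hasOrder B (omega0 ^ ξ) → WeaklyNullColl B g → (∀ t ∈ B, ‖g t‖ ≤ σ) →
      sInf {c : ℝ | ∃ t ∈ B, ∃ x ∈ branchHull B g t, c = ‖y + A x‖ ^ p} ≤ ‖y‖ ^ p + C * σ ^ p}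

/-- The set of constants `C > 0` witnessing `t_{ξ,∞}(A)`:
`inf {‖y + Ax‖} ≤ max {‖y‖, C σ}` under the same quantification. -/
def tInfConstSet (ξ : Ordinal.{0}) (A : X →L[ℝ] Y) : Set ℝ :=
  {C : ℝ | 0 < C ∧ ∀ (y : Y) (σ : ℝ), 0 < σ →
    ∀ (Λ : Type (max u 1)) (B : Set (List Λ)) (g : List Λ → X),
      IsBTree B → hasOrder B (omega0 ^ ξ) → WeaklyNullColl B g → (∀ t ∈ B, ‖g t‖ ≤ σ) →
      sInf {c : ℝ | ∃ t ∈ B, ∃ x ∈ branchHull B g t, c = ‖y + A x‖} ≤ max ‖y‖ (C * σ)}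

/-- Modulus `δ^{w*}_ξ(τ; A* : (Y,N)* → X*)` of weak*-ξ-asymptotic uniform convexity
of the adjoint `A*`, with `Y` renormed by `N`: the infimum over `y*` of `N`-dual-norm `1`,
B-trees `B` with `o(B) = ω^ξ`, and weak*-null `(A*,τ)`-large collections `(z*_s)_{s∈B}`
of `sup {N*(y* + Σ_{s ⪯ t} z*_s) − 1 : t ∈ B}`. -/
def deltaWith (ξ : Ordinal.{0}) (A : X →L[ℝ] Y) (N : Y → ℝ) (τ : ℝ) : ℝ :=
  sInf {r : ℝ | ∃ g : StrongDual ℝ Y, dualNormOf N g = 1 ∧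
    ∃ (Λ : Type (max u 1)) (B : Set (List Λ)) (z : List Λ → StrongDual ℝ Y),
      IsBTree B ∧ hasOrder B (omega0 ^ ξ) ∧ WStarNullColl B z ∧
      (∀ s ∈ B, τ < ‖(z s).comp A‖) ∧
      r = sSup {c : ℝ | ∃ t ∈ B, c = dualNormOf N (g + ∑ s ∈ branchFinset B t, z s) - 1}}

/-- `δ^{w*}_ξ(τ; A*)` with the original norm of `Y`. -/
def deltaOp (ξ : Ordinal.{0}) (A : X →L[ℝ] Y) (τ : ℝ) : ℝ :=
  sInf {r : ℝ | ∃ g : StrongDual ℝ Y, ‖g‖ = 1 ∧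
    ∃ (Λ : Type (max u 1)) (B : Set (List Λ)) (z : List Λ → StrongDual ℝ Y),
      IsBTree B ∧ hasOrder B (omega0 ^ ξ) ∧ WStarNullColl B z ∧
      (∀ s ∈ B, τ < ‖(z s).comp A‖) ∧
      r = sSup {c : ℝ | ∃ t ∈ B, c = ‖g + ∑ s ∈ branchFinset B t, z s‖ - 1}}

/-- `A* : (Y,N)* → X*` is weak*-ξ-asymptotically uniformly convex with power type `p`:
`δ^{w*}_ξ(τ;A*) ≥ c τ^p` for all `0 < τ ≤ 1`. -/
def AUCWith (ξ : Ordinal.{0}) (A : X →L[ℝ] Y) (N : Y → ℝ) (p : ℝ) : Prop :=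
  ∃ c : ℝ, 0 < c ∧ ∀ τ : ℝ, 0 < τ → τ ≤ 1 → c * τ ^ p ≤ deltaWith ξ A N τ

/-! ### Space (identity operator) versions, for a renorming `N` of `X` itself. -/

/-- The modulus `ρ_ξ(σ)` of the norm `N` on `X`. -/
def rhoSpace (ξ : Ordinal.{0}) (N : X → ℝ) (σ : ℝ) : ℝ :=
  sSup {r : ℝ | ∃ y : X, N y ≤ 1 ∧
    ∃ (Λ : Type (max u 1)) (B : Set (List Λ)) (g : List Λ → X),
      IsBTree B ∧ hasOrder B (omega0 ^ ξ) ∧ WeaklyNullColl B g ∧ (∀ t ∈ B, N (g t) ≤ σ) ∧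
      r = sInf {c : ℝ | ∃ t ∈ B, ∃ x ∈ branchHull B g t, c = N (y + x) - 1}}

/-- The norm `N` on `X` is ξ-asymptotically uniformly smooth with power type `p`. -/
def AUSSpace (ξ : Ordinal.{0}) (N : X → ℝ) (p : ℝ) : Prop :=
  ∃ C : ℝ, ∀ σ : ℝ, 0 < σ → σ ≤ 1 → rhoSpace ξ N σ ≤ C * σ ^ p

/-- The modulus `δ^{w*}_ξ(τ)` of the dual norm of `N` on `X*`. -/
def deltaSpace (ξ : Ordinal.{0}) (N : X → ℝ) (τ : ℝ) : ℝ :=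
  sInf {r : ℝ | ∃ g : StrongDual ℝ X, dualNormOf N g = 1 ∧
    ∃ (Λ : Type (max u 1)) (B : Set (List Λ)) (z : List Λ → StrongDual ℝ X),
      IsBTree B ∧ hasOrder B (omega0 ^ ξ) ∧ WStarNullColl B z ∧
      (∀ s ∈ B, τ < dualNormOf N (z s)) ∧
      r = sSup {c : ℝ | ∃ t ∈ B, c = dualNormOf N (g + ∑ s ∈ branchFinset B t, z s) - 1}}

/-- The dual norm of `N` on `X*` is weak*-ξ-asymptotically uniformly convex with
power type `p`. -/
def AUCSpace (ξ : Ordinal.{0}) (N : X → ℝ) (p : ℝ) : Prop :=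
  ∃ c : ℝ, 0 < c ∧ ∀ τ : ℝ, 0 < τ → τ ≤ 1 → c * τ ^ p ≤ deltaSpace ξ N τ

end Collections

/-! ### The trees `Γ_ξ`, `Γ_{ξ,n}`, `Γ_{ξ,∞}`, their levels, and the weights `ℙ_ξ`. -/

/-- `ζ + S`: shift every entry of every sequence in `S` by `ζ`. -/
def shiftSet (ζ : Ordinal.{0}) (S : Set (List Ordinal.{0})) : Set (List Ordinal.{0}) :=
  (fun t => t.map fun a => ζ + a) '' S

/-- `gammaStep ξ G n = Γ_{ξ,n+1}` built from `G = Γ_ξ`: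
`Γ_{ξ,1} = Γ_ξ` and `Γ_{ξ,n+1} = (ω^ξ·n + Γ_ξ) ∪ {t ⌢ u : t ∈ MAX(ω^ξ·n + Γ_ξ), u ∈ Γ_{ξ,n}}`. -/
def gammaStep (ξ : Ordinal.{0}) (G : Set (List Ordinal.{0})) : ℕ → Set (List Ordinal.{0})
  | 0 => G
  | n + 1 =>
    shiftSet (omega0 ^ ξ * ((n : Ordinal.{0}) + 1)) G ∪
      {w | ∃ t ∈ maxMembers (shiftSet (omega0 ^ ξ * ((n : Ordinal.{0}) + 1)) G),
        ∃ u ∈ gammaStep ξ G n, w = t ++ u}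

/-- The B-trees `Γ_ξ`: `Γ_0 = {(0)}`, `Γ_{ξ+1} = ⋃_n Γ_{ξ,n}`, and at limit `ξ`,
`Γ_ξ = ⋃_{ζ<ξ} (ω^ζ + Γ_{ζ+1})`. -/
def Gamma (ξ : Ordinal.{0}) : Set (List Ordinal.{0}) :=
  Ordinal.limitRecOn (motive := fun _ => Set (List Ordinal.{0})) ξ
    {[(0 : Ordinal.{0})]}
    (fun ζ G => ⋃ n : ℕ, gammaStep ζ G n)
    (fun _ hξ f => ⋃ η : Set.Iio _,
      shiftSet (omega0 ^ (η.1 : Ordinal.{0}))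
        (f (Order.succ η.1) (hξ.succ_lt (Set.mem_Iio.mp η.2))))

/-- `Γ_{ξ,n}` for `n ≥ 1` (junk value `Γ_ξ` for `n = 0`). -/
def GammaN (ξ : Ordinal.{0}) (n : ℕ) : Set (List Ordinal.{0}) :=
  gammaStep ξ (Gamma ξ) (n - 1)

/-- The level `Λ_{ξ,n,m}` of `Γ_{ξ,n}`: sequences of the form
`(ω^ξ(n−1)+t_1) ⌢ … ⌢ (ω^ξ(n−m)+t_m)` with `t_i ∈ Γ_ξ` nonempty and
`t_1, …, t_{m−1}` maximal in `Γ_ξ`. -/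
def levelN (ξ : Ordinal.{0}) (n m : ℕ) : Set (List Ordinal.{0}) :=
  {w | ∃ ts : Fin m → List Ordinal.{0},
    (∀ i, ts i ∈ Gamma ξ ∧ ts i ≠ []) ∧
    (∀ i : Fin m, (i : ℕ) + 1 < m → ts i ∈ maxMembers (Gamma ξ)) ∧
    w = (List.ofFn fun i : Fin m =>
      (ts i).map fun a => omega0 ^ ξ * ((n - 1 - (i : ℕ) : ℕ) : Ordinal.{0}) + a).flatten}

/-- The level `Λ_{ξ,∞,m}` of `Γ_{ξ,∞}`: sequences
`t_1 ⌢ (ω^ξ + t_2) ⌢ … ⌢ (ω^ξ(m−1) + t_m)` with `t_i ∈ Γ_ξ` nonempty and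
`t_1, …, t_{m−1}` maximal in `Γ_ξ`. -/
def levelInf (ξ : Ordinal.{0}) (m : ℕ) : Set (List Ordinal.{0}) :=
  {w | ∃ ts : Fin m → List Ordinal.{0},
    (∀ i, ts i ∈ Gamma ξ ∧ ts i ≠ []) ∧
    (∀ i : Fin m, (i : ℕ) + 1 < m → ts i ∈ maxMembers (Gamma ξ)) ∧
    w = (List.ofFn fun i : Fin m =>
      (ts i).map fun a => omega0 ^ ξ * ((i : ℕ) : Ordinal.{0}) + a).flatten}

/-- `Γ_{ξ,∞} = ⋃_{m ≥ 1} Λ_{ξ,∞,m}`. -/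
def GammaInf (ξ : Ordinal.{0}) : Set (List Ordinal.{0}) :=
  ⋃ m : ℕ, levelInf ξ (m + 1)

/-- The unit-wise identification `ι` sending a member of `Γ_{ξ,n}` (or `Γ_{ξ,∞}`)
to the member of `Γ_ξ` obtained by unshifting its last unit: the last block of
entries lying in the same `ω^ξ`-range as the final entry, unshifted. -/
def iota (ξ : Ordinal.{0}) (t : List Ordinal.{0}) : List Ordinal.{0} :=
  match t.getLast? with
  | none => []
  | some o =>
    ((t.reverse.takeWhile fun a => decide (a / omega0 ^ ξ = o / omega0 ^ ξ)).reverse).map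
      fun a => a - omega0 ^ ξ * (o / omega0 ^ ξ)

/-- The weights `ℙ_ξ : Γ_ξ → [0,1]`: `ℙ_0 ≡ 1`; `ℙ_{ξ+1}(t) = (1/n) ℙ_ξ(ι_{ξ,n}(t))`
for `t ∈ Γ_{ξ,n}` (here `n` is recovered from the first entry of `t`); at limit `ξ`,
`ℙ_ξ(t) = ℙ_{ζ+1}(t − ω^ζ)` where `t ∈ ω^ζ + Γ_{ζ+1}`, `ζ = log_ω(first entry)`. -/
def Pweight (ξ : Ordinal.{0}) : List Ordinal.{0} → ℝ :=
  Ordinal.limitRecOn (motive := fun _ => List Ordinal.{0} → ℝ) ξ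
    (fun _ => 1)
    (fun ζ Pz t =>
      (((t.headI / omega0 ^ ζ).card.toNat : ℝ) + 1)⁻¹ * Pz (iota ζ t))
    (fun ξ' _ f t =>
      if h : Order.succ (Ordinal.log omega0 t.headI) < ξ' then
        f (Order.succ (Ordinal.log omega0 t.headI)) h
          (t.map fun a => a - omega0 ^ Ordinal.log omega0 t.headI)
      else 0)

section OmegaTrees

variable {X Y : Type u} [NormedAddCommGroup X] [NormedSpace ℝ X]
  [NormedAddCommGroup Y] [NormedSpace ℝ Y]

/-- `D` is a weak neighborhood basis at `0` in `X`, directed by reverse inclusion. -/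
def IsWeakNhdBasis (D : Set (Set X)) : Prop :=
  (∀ U ∈ D, U ∈ weakNhds (0 : X)) ∧ (∀ V ∈ weakNhds (0 : X), ∃ U ∈ D, U ⊆ V) ∧
    ∀ U ∈ D, ∀ V ∈ D, ∃ W ∈ D, W ⊆ U ∩ V

/-- `G·D`: the tree of sequences of pairs whose ordinal coordinates form a member
of `G` and whose second coordinates belong to `D`.  For `G = Γ_ξ` this is `Ω_ξ`,
for `G = Γ_{ξ,n}` it is `Ω_{ξ,n}`, etc. -/
def OmegaOf (D : Set (Set X)) (G : Set (List Ordinal.{0})) :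
    Set (List (Ordinal.{0} × Set X)) :=
  {w | w.map Prod.fst ∈ G ∧ ∀ p ∈ w, p.2 ∈ D}

/-- A collection `(x_t)_{t ∈ Ω}` is normally weakly null: `x_t ∈ U` whenever
`t = t₁ ⌢ (ζ, U)`. -/
def NormallyWNull (Ω : Set (List (Ordinal.{0} × Set X)))
    (g : List (Ordinal.{0} × Set X) → X) : Prop :=
  ∀ w ∈ Ω, ∀ (w₁ : List (Ordinal.{0} × Set X)) (ζ : Ordinal.{0}) (U : Set X),
    w = w₁ ++ [(ζ, U)] → g w ∈ U

/-- The weight `ℙ_ξ(ι_ξ(s))` of a node of an `Ω`-tree (the `D`-coordinates are ignored). -/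
def PweightIota (ξ : Ordinal.{0}) (s : List (Ordinal.{0} × Set X)) : ℝ :=
  Pweight ξ (iota ξ (s.map Prod.fst))

/-- The full special convex combination `Σ_{s ⪯ t, s ∈ Ω} ℙ_ξ(ι_ξ(s)) x_s` along the
branch through `t` (equal to `Σ_i z_i^t` for the special convex blocks `z_i^t`). -/
def branchComb (ξ : Ordinal.{0}) (Ω : Set (List (Ordinal.{0} × Set X)))
    (g : List (Ordinal.{0} × Set X) → X) (t : List (Ordinal.{0} × Set X)) : X :=
  ∑ s ∈ t.inits.toFinset.filter (fun s => s ∈ Ω), PweightIota ξ s • g s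

/-- The special convex block `z_m^t` of `(x_s)` lying on level `m`:
`z_m^t = Σ_{s ⪯ t, s ∈ Λ_{ξ,n,m}} ℙ_ξ(ι_{ξ,n}(s)) x_s`. -/
def levelBlock (ξ : Ordinal.{0}) (n m : ℕ)
    (g : List (Ordinal.{0} × Set X) → X) (t : List (Ordinal.{0} × Set X)) : X :=
  ∑ s ∈ t.inits.toFinset.filter (fun s => s.map Prod.fst ∈ levelN ξ n m),
    PweightIota ξ s • g s

/-- The convex block of `(x_s)` along the branch-segment `t ≺ s ⪯ t'` inside `Ω`. -/
def chainBlock (ξ : Ordinal.{0}) (Ω : Set (List (Ordinal.{0} × Set X)))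
    (g : List (Ordinal.{0} × Set X) → X) (t t' : List (Ordinal.{0} × Set X)) : X :=
  ∑ s ∈ t'.inits.toFinset.filter (fun s => s ∈ Ω ∧ t <+: s ∧ s ≠ t),
    PweightIota ξ s • g s

/-- The property defining `N_ξ(σ; A)` (relative to the weak neighborhood basis `D`):
there is a normally weakly null collection `(x_t)_{t ∈ Ω_{ξ,N+1}} ⊆ σ B_X` with
`‖Σ_{i=1}^{N+1} A z_i^t‖ > 1` for every maximal `t`.  `N_ξ(σ;A)` is the least `N`
with this property. -/
def NxiProp (ξ : Ordinal.{0}) (A : X →L[ℝ] Y) (D : Set (Set X)) (σ : ℝ) (N : ℕ) : Prop :=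
  ∃ g : List (Ordinal.{0} × Set X) → X,
    NormallyWNull (OmegaOf D (GammaN ξ (N + 1))) g ∧
    (∀ t ∈ OmegaOf D (GammaN ξ (N + 1)), ‖g t‖ ≤ σ) ∧
    ∀ t ∈ maxMembers (OmegaOf D (GammaN ξ (N + 1))),
      1 < ‖A (branchComb ξ (OmegaOf D (GammaN ξ (N + 1))) g t)‖

/-- `(u_n)` is `C`-dominated by the unit vector basis of `ℓ_p`. -/
def DominatedLp (u : ℕ → Y) (p C : ℝ) : Prop :=
  ∀ (m : ℕ) (a : ℕ → ℝ),
    ‖∑ n ∈ Finset.range m, a n • u n‖ ≤ C * (∑ n ∈ Finset.range m, |a n| ^ p) ^ (1 / p)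

/-- `(u_n)` is `C`-dominated by the unit vector basis of `c₀`. -/
def DominatedC0 (u : ℕ → Y) (C : ℝ) : Prop :=
  ∀ (m : ℕ) (a : ℕ → ℝ) (b : ℝ), (∀ n ∈ Finset.range m, |a n| ≤ b) →
    ‖∑ n ∈ Finset.range m, a n • u n‖ ≤ C * b

/-- `A` satisfies ξ-`ℓ_p` upper tree estimates: every normally weakly null collection
indexed by `Ω_{ξ,∞}` in `B_X` admits a chain `∅ = t_0 ≺ t_1 ≺ ⋯` through the levels
such that the images under `A` of the special convex blocks are dominated by the unit
vector basis of `ℓ_p`. -/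
def UpperTreeEst (ξ : Ordinal.{0}) (A : X →L[ℝ] Y) (p : ℝ) : Prop :=
  ∀ D : Set (Set X), IsWeakNhdBasis D →
    ∀ g : List (Ordinal.{0} × Set X) → X,
      NormallyWNull (OmegaOf D (GammaInf ξ)) g →
      (∀ t ∈ OmegaOf D (GammaInf ξ), ‖g t‖ ≤ 1) →
      ∃ ts : ℕ → List (Ordinal.{0} × Set X), ts 0 = [] ∧
        (∀ n : ℕ, ts n <+: ts (n + 1) ∧ ts n ≠ ts (n + 1)) ∧
        (∀ n : ℕ, ts (n + 1) ∈ maxMembers (OmegaOf D (levelInf ξ (n + 1)))) ∧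
        ∃ C : ℝ, DominatedLp
          (fun n => A (chainBlock ξ (OmegaOf D (GammaInf ξ)) g (ts n) (ts (n + 1)))) p C

end OmegaTrees

/-! ### ε-largeness of functions on `Γ_ξ` -/

/-- A function `f : Γ_ξ → ℝ` is ε-large: for every `δ > 0` there is a monotone
`θ : Γ_ξ → Γ_ξ` with `f(θ(t)) ≥ ε − δ` for all `t ∈ Γ_ξ`. -/
def IsLarge (ξ : Ordinal.{0}) (f : List Ordinal.{0} → ℝ) (ε : ℝ) : Prop :=
  ∀ δ : ℝ, 0 < δ → ∃ θ : List Ordinal.{0} → List Ordinal.{0},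
    Set.MapsTo θ (Gamma ξ) (Gamma ξ) ∧
    (∀ s t : List Ordinal.{0}, s ∈ Gamma ξ → t ∈ Gamma ξ → s <+: t → s ≠ t →
      θ s <+: θ t ∧ θ s ≠ θ t) ∧
    ∀ t ∈ Gamma ξ, ε - δ ≤ f (θ t)

/-! ### Auxiliary lemmas for Statement 6 -/

section Statement6Aux

variable {X Y : Type u} [NormedAddCommGroup X] [NormedSpace ℝ X]
  [NormedAddCommGroup Y] [NormedSpace ℝ Y]

lemma weakClosure_smul_zero (c : ℝ) {S : Set X} (h : (0 : X) ∈ weakClosure S) :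
    (0 : X) ∈ weakClosure ((fun x => c • x) '' S) := by
  unfold weakClosure at h ⊢
  rw [Set.mem_preimage] at h ⊢
  haveI : ContinuousSMul ℝ (WeakSpace ℝ X) := WeakBilin.instContinuousSMul _
  have hc : Continuous fun x : WeakSpace ℝ X => c • x := continuous_const.smul continuous_id
  have h2 := (image_closure_subset_closure_image hc) (Set.mem_image_of_mem _ h)
  have himg : (fun x : WeakSpace ℝ X => c • x) '' (⇑(toWeakSpace ℝ X) '' S)
      = ⇑(toWeakSpace ℝ X) '' ((fun x => c • x) '' S) := by
    rw [← Set.image_comp, ← Set.image_comp]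
    refine Set.image_congr' fun x => ?_
    simp only [Function.comp_apply, map_smul]
  rw [himg] at h2
  have h0 : c • (toWeakSpace ℝ X) (0 : X) = (toWeakSpace ℝ X) (0 : X) := by
    rw [map_zero, smul_zero]
  rwa [h0] at h2

lemma WeaklyNullColl.const_smul {Λ : Type v} {B : Set (List Λ)} {g : List Λ → X}
    (h : WeaklyNullColl B g) (c : ℝ) : WeaklyNullColl B (fun s => c • g s) := by
  intro ζ t ht
  have heq : {x : X | ∃ s ∈ treeIter B ζ, s ≠ [] ∧ s.dropLast = t ∧ x = (fun s => c • g s) s}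
      = (fun x => c • x) '' {x : X | ∃ s ∈ treeIter B ζ, s ≠ [] ∧ s.dropLast = t ∧ x = g s} := by
    ext x
    constructor
    · rintro ⟨s, hs, h1, h2, rfl⟩
      exact ⟨g s, ⟨s, hs, h1, h2, rfl⟩, rfl⟩
    · rintro ⟨z, ⟨s, hs, h1, h2, rfl⟩, rfl⟩
      exact ⟨s, hs, h1, h2, rfl⟩
  rw [heq]
  exact weakClosure_smul_zero c (h ζ t ht)

lemma treeIter_zero {Λ : Type v} (B : Set (List Λ)) : treeIter B 0 = B := by
  unfold treeIter
  exact Ordinal.limitRecOn_zero ..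

lemma exists_mem_of_hasOrder {Λ : Type v} {B : Set (List Λ)} {ξ : Ordinal.{0}}
    (h : hasOrder B (omega0 ^ ξ)) : ∃ t, t ∈ B := by
  have h0 := h.2 0 (Ordinal.opow_pos ξ Ordinal.omega0_pos)
  rw [treeIter_zero] at h0
  exact Set.nonempty_def.mp (Set.nonempty_iff_ne_empty.mpr h0)

lemma mem_branchHull_self {Λ : Type v} {B : Set (List Λ)} (g : List Λ → X) {t : List Λ}
    (ht : t ∈ B) : g t ∈ branchHull B g t :=
  subset_convexHull ℝ _ ⟨t, ht, List.prefix_refl t, rfl⟩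

lemma norm_le_of_mem_branchHull {Λ : Type v} {B : Set (List Λ)} {g : List Λ → X} {σ : ℝ}
    (hbd : ∀ t ∈ B, ‖g t‖ ≤ σ) {t : List Λ} {x : X} (hx : x ∈ branchHull B g t) : ‖x‖ ≤ σ := by
  have hsub : branchHull B g t ⊆ Metric.closedBall 0 σ := by
    refine convexHull_min ?_ (convex_closedBall 0 σ)
    rintro z ⟨s, hs, -, rfl⟩
    simpa [dist_zero_right] using hbd s hs
  simpa [dist_zero_right] using hsub hx

lemma branchHull_smul {Λ : Type v} (c : ℝ) (B : Set (List Λ)) (g : List Λ → X) (t : List Λ) :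
    branchHull B (fun s => c • g s) t = (fun x => c • x) '' branchHull B g t := by
  unfold branchHull
  have heq : {x : X | ∃ s ∈ B, s <+: t ∧ x = (fun s => c • g s) s}
      = c • {x : X | ∃ s ∈ B, s <+: t ∧ x = g s} := by
    ext x
    rw [Set.mem_smul_set]
    constructor
    · rintro ⟨s, hs, h1, rfl⟩
      exact ⟨g s, ⟨s, hs, h1, rfl⟩, rfl⟩
    · rintro ⟨z, ⟨s, hs, h1, rfl⟩, rfl⟩
      exact ⟨s, hs, h1, rfl⟩
  rw [heq, convexHull_smul, ← Set.image_smul]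

lemma le_rho (ξ : Ordinal.{0}) (A : X →L[ℝ] Y) {σ : ℝ}
    (y : Y) (hy : ‖y‖ ≤ 1)
    (Λ : Type (max u 1)) (B : Set (List Λ)) (g : List Λ → X) (hB : IsBTree B)
    (ho : hasOrder B (omega0 ^ ξ)) (hwn : WeaklyNullColl B g) (hbd : ∀ t ∈ B, ‖g t‖ ≤ σ) :
    sInf {c : ℝ | ∃ t ∈ B, ∃ x ∈ branchHull B g t, c = ‖y + A x‖ - 1} ≤ rho ξ A σ := by
  unfold rho rhoWith
  refine le_csSup ?_ ⟨y, hy, Λ, B, g, hB, ho, hwn, hbd, rfl⟩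
  refine ⟨max 0 (‖A‖ * σ), ?_⟩
  rintro r ⟨y', hy', Λ', B', g', hB', ho', hwn', hbd', rfl⟩
  obtain ⟨t', ht'⟩ := exists_mem_of_hasOrder ho'
  have hmem : ‖y' + A (g' t')‖ - 1 ∈
      {c : ℝ | ∃ t ∈ B', ∃ x ∈ branchHull B' g' t, c = ‖y' + A x‖ - 1} :=
    ⟨t', ht', g' t', mem_branchHull_self g' ht', rfl⟩
  have hlow : BddBelow {c : ℝ | ∃ t ∈ B', ∃ x ∈ branchHull B' g' t, c = ‖y' + A x‖ - 1} := by
    refine ⟨-1, ?_⟩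
    rintro c ⟨t, -, x, -, rfl⟩
    have := norm_nonneg (y' + A x)
    linarith
  refine (csInf_le hlow hmem).trans (le_trans ?_ (le_max_right _ _))
  have h1 : ‖A (g' t')‖ ≤ ‖A‖ * σ :=
    (A.le_opNorm (g' t')).trans (mul_le_mul_of_nonneg_left (hbd' t' ht') (norm_nonneg _))
  have h2 := norm_add_le y' (A (g' t'))
  linarith

lemma one_add_rpow_le {p : ℝ} (hp : 1 ≤ p) {U u : ℝ} (hU : 0 < U) (hu0 : 0 ≤ u) (huU : u ≤ U) :
    (1 + u) ^ p ≤ 1 + ((1 + U) ^ p - 1) / U * u := by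
  have hcx := convexOn_rpow hp
  have ha : (0 : ℝ) ≤ 1 - u / U := by
    have : u / U ≤ 1 := (div_le_one hU).mpr huU
    linarith
  have hb : (0 : ℝ) ≤ u / U := div_nonneg hu0 hU.le
  have hab : (1 - u / U) + u / U = 1 := by ring
  have h1 : (1 : ℝ) ∈ Set.Ici (0 : ℝ) := by norm_num
  have h2 : (1 + U) ∈ Set.Ici (0 : ℝ) := by
    rw [Set.mem_Ici]; linarith
  have hkey := hcx.2 h1 h2 ha hb hab
  simp only [_root_.smul_eq_mul] at hkey
  have harg : (1 - u / U) * 1 + u / U * (1 + U) = 1 + u := by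
    field_simp
    ring
  rw [harg, Real.one_rpow] at hkey
  calc (1 + u) ^ p ≤ (1 - u / U) * 1 + u / U * (1 + U) ^ p := hkey
    _ = 1 + ((1 + U) ^ p - 1) / U * u := by field_simp; ring

lemma rho_le_of_tConst {ξ : Ordinal.{0}} {A : X →L[ℝ] Y} {p : ℝ} (hp : 1 < p)
    {C : ℝ} (hC : C ∈ tConstSet ξ A p) {σ : ℝ} (hσ : 0 < σ) :
    rho ξ A σ ≤ C * σ ^ p := by
  obtain ⟨hC0, hCt⟩ := hC
  have hσp : (0 : ℝ) < σ ^ p := Real.rpow_pos_of_pos hσ p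
  have hCσ : 0 ≤ C * σ ^ p := by positivity
  unfold rho rhoWith
  refine Real.sSup_le ?_ hCσ
  rintro r ⟨y, hy, Λ, B, g, hB, ho, hwn, hbd, rfl⟩
  have hT := hCt y σ hσ Λ B g hB ho hwn hbd
  refine le_of_forall_pos_le_add fun ε hε => ?_
  obtain ⟨t0, ht0⟩ := exists_mem_of_hasOrder ho
  have hne : {c : ℝ | ∃ t ∈ B, ∃ x ∈ branchHull B g t, c = ‖y + A x‖ ^ p}.Nonempty :=
    ⟨_, t0, ht0, g t0, mem_branchHull_self g ht0, rfl⟩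
  obtain ⟨a, ⟨t, ht, x, hx, rfl⟩, ha⟩ := Real.lt_sInf_add_pos hne hε
  have hyp : ‖y‖ ^ p ≤ 1 := Real.rpow_le_one (norm_nonneg y) hy (by linarith)
  have hlt : ‖y + A x‖ ^ p < 1 + (C * σ ^ p + ε) := by linarith
  have hnle : ‖y + A x‖ - 1 ≤ C * σ ^ p + ε := by
    rcases le_or_gt ‖y + A x‖ 1 with h1 | h1
    · linarith
    · have hle : ‖y + A x‖ ≤ ‖y + A x‖ ^ p := by
        calc ‖y + A x‖ = ‖y + A x‖ ^ (1 : ℝ) := (Real.rpow_one _).symm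
          _ ≤ ‖y + A x‖ ^ p := Real.rpow_le_rpow_of_exponent_le h1.le hp.le
      linarith
  have hbdd : BddBelow {c : ℝ | ∃ t ∈ B, ∃ x ∈ branchHull B g t, c = ‖y + A x‖ - 1} := by
    refine ⟨-1, ?_⟩
    rintro c ⟨t', -, x', -, rfl⟩
    have := norm_nonneg (y + A x')
    linarith
  have hfin := csInf_le hbdd (⟨t, ht, x, hx, rfl⟩ :
    ‖y + A x‖ - 1 ∈ {c : ℝ | ∃ t ∈ B, ∃ x ∈ branchHull B g t, c = ‖y + A x‖ - 1})
  linarith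

lemma key_mem_tConstSet (ξ : Ordinal.{0}) (A : X →L[ℝ] Y) {p : ℝ} (hp : 1 < p)
    {C : ℝ} (hC : 1 ≤ C)
    (hrho : ∀ σ : ℝ, 0 < σ → σ < 1 → rho ξ A σ ≤ C * σ ^ p) :
    max ((1 + ‖A‖) ^ p) (((C + 2) ^ p - 1) / (C + 1) * C) ∈ tConstSet ξ A p := by
  have hp0 : (0 : ℝ) ≤ p := by linarith
  have hC'1 : (1 : ℝ) ≤ (1 + ‖A‖) ^ p := by
    calc (1 : ℝ) = 1 ^ p := (Real.one_rpow p).symm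
      _ ≤ (1 + ‖A‖) ^ p := Real.rpow_le_rpow (by norm_num) (by linarith [norm_nonneg A]) hp0
  refine ⟨lt_of_lt_of_le one_pos (hC'1.trans (le_max_left _ _)), ?_⟩
  intro y σ hσ Λ B g hB ho hwn hbd
  have hσp : (0 : ℝ) < σ ^ p := Real.rpow_pos_of_pos hσ p
  have hbddT : BddBelow {c : ℝ | ∃ t ∈ B, ∃ x ∈ branchHull B g t, c = ‖y + A x‖ ^ p} := by
    refine ⟨0, ?_⟩
    rintro c ⟨t, -, x, -, rfl⟩
    exact Real.rpow_nonneg (norm_nonneg _) p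
  obtain ⟨t0, ht0⟩ := exists_mem_of_hasOrder ho
  rcases le_or_gt ‖y‖ σ with hyσ | hyσ
  · -- easy case ‖y‖ ≤ σ
    have hmem : ‖y + A (g t0)‖ ^ p ∈
        {c : ℝ | ∃ t ∈ B, ∃ x ∈ branchHull B g t, c = ‖y + A x‖ ^ p} :=
      ⟨t0, ht0, g t0, mem_branchHull_self g ht0, rfl⟩
    refine (csInf_le hbddT hmem).trans ?_
    have h1 : ‖y + A (g t0)‖ ≤ (1 + ‖A‖) * σ := by
      have hA : ‖A (g t0)‖ ≤ ‖A‖ * σ :=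
        (A.le_opNorm (g t0)).trans (mul_le_mul_of_nonneg_left (hbd t0 ht0) (norm_nonneg _))
      have h2 := norm_add_le y (A (g t0))
      nlinarith
    calc ‖y + A (g t0)‖ ^ p ≤ ((1 + ‖A‖) * σ) ^ p :=
          Real.rpow_le_rpow (norm_nonneg _) h1 hp0
      _ = (1 + ‖A‖) ^ p * σ ^ p := Real.mul_rpow (by linarith [norm_nonneg A]) hσ.le
      _ ≤ ‖y‖ ^ p + max ((1 + ‖A‖) ^ p) (((C + 2) ^ p - 1) / (C + 1) * C) * σ ^ p := by
          have h2 : (1 + ‖A‖) ^ p ≤ max ((1 + ‖A‖) ^ p) (((C + 2) ^ p - 1) / (C + 1) * C) :=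
            le_max_left _ _
          nlinarith [Real.rpow_nonneg (norm_nonneg y) p]
  · -- main case σ < ‖y‖
    have hy0 : (0 : ℝ) < ‖y‖ := hσ.trans hyσ
    set lam := σ / ‖y‖ with hlamdef
    have hlam0 : 0 < lam := div_pos hσ hy0
    have hlam1 : lam < 1 := (div_lt_one hy0).mpr hyσ
    have hlamp : (0 : ℝ) < lam ^ p := Real.rpow_pos_of_pos hlam0 p
    set g' := fun s : List Λ => ‖y‖⁻¹ • g s with hg'def
    have hbd' : ∀ t ∈ B, ‖g' t‖ ≤ lam := by
      intro t ht
      rw [hg'def]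
      simp only [norm_smul, norm_inv, norm_norm]
      rw [hlamdef, div_eq_inv_mul]
      exact mul_le_mul_of_nonneg_left (hbd t ht) (inv_nonneg.mpr (norm_nonneg y))
    have hy' : ‖‖y‖⁻¹ • y‖ ≤ 1 := by
      rw [norm_smul, norm_inv, norm_norm, inv_mul_cancel₀ hy0.ne']
    have hle1 := le_rho ξ A (‖y‖⁻¹ • y) hy' Λ B g' hB ho (hwn.const_smul _) hbd'
    have hle2 := hrho lam hlam0 hlam1
    have hsI : sInf {c : ℝ | ∃ t ∈ B, ∃ x ∈ branchHull B g' t, c = ‖‖y‖⁻¹ • y + A x‖ - 1}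
        ≤ C * lam ^ p := hle1.trans hle2
    refine le_of_forall_pos_le_add fun δ hδ => ?_
    set K := ((C + 2) ^ p - 1) / (C + 1) with hKdef
    have hKnum : (1 : ℝ) ≤ (C + 2) ^ p := by
      calc (1 : ℝ) = 1 ^ p := (Real.one_rpow p).symm
        _ ≤ (C + 2) ^ p := Real.rpow_le_rpow (by norm_num) (by linarith) hp0
    have hK0 : 0 ≤ K := div_nonneg (by linarith) (by linarith)
    have hyp0 : (0 : ℝ) < ‖y‖ ^ p := Real.rpow_pos_of_pos hy0 p
    have hden : (0 : ℝ) < K * ‖y‖ ^ p + 1 := by positivity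
    set ε := min 1 (δ / (K * ‖y‖ ^ p + 1)) with hεdef
    have hε0 : 0 < ε := lt_min one_pos (div_pos hδ hden)
    have hε1 : ε ≤ 1 := min_le_left _ _
    have hεδ : K * ‖y‖ ^ p * ε ≤ δ := by
      have h1 : ε ≤ δ / (K * ‖y‖ ^ p + 1) := min_le_right _ _
      have h2 : K * ‖y‖ ^ p * ε ≤ (K * ‖y‖ ^ p + 1) * (δ / (K * ‖y‖ ^ p + 1)) := by
        apply mul_le_mul (by linarith) h1 hε0.le (by linarith)
      rwa [mul_div_cancel₀ _ hden.ne'] at h2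
    have hne' : {c : ℝ | ∃ t ∈ B, ∃ x ∈ branchHull B g' t,
        c = ‖‖y‖⁻¹ • y + A x‖ - 1}.Nonempty :=
      ⟨_, t0, ht0, g' t0, mem_branchHull_self g' ht0, rfl⟩
    obtain ⟨a, ⟨t, ht, x', hx', rfl⟩, ha⟩ := Real.lt_sInf_add_pos hne' hε0
    obtain ⟨x, hx, rfl⟩ : ∃ x ∈ branchHull B g t, x' = ‖y‖⁻¹ • x := by
      have heq := branchHull_smul (‖y‖⁻¹) B g t
      rw [hg'def] at hx'
      rw [heq] at hx'
      obtain ⟨x, hx, rfl⟩ := hx'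
      exact ⟨x, hx, rfl⟩
    have hnorm : ‖‖y‖⁻¹ • y + A (‖y‖⁻¹ • x)‖ = ‖y‖⁻¹ * ‖y + A x‖ := by
      rw [map_smul, ← smul_add, norm_smul, norm_inv, norm_norm]
    set u := C * lam ^ p + ε with hudef
    have hu0 : 0 < u := by positivity
    have haux : ‖y + A x‖ ≤ ‖y‖ * (1 + u) := by
      have h1 : ‖y‖⁻¹ * ‖y + A x‖ - 1 < u := by
        rw [← hnorm]
        calc ‖‖y‖⁻¹ • y + A (‖y‖⁻¹ • x)‖ - 1 < sInf _ + ε := ha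
          _ ≤ C * lam ^ p + ε := by linarith
      have h2 : ‖y + A x‖ = ‖y‖ * (‖y‖⁻¹ * ‖y + A x‖) := by
        rw [← mul_assoc, mul_inv_cancel₀ hy0.ne', one_mul]
      rw [h2]
      exact mul_le_mul_of_nonneg_left (by linarith) (norm_nonneg y)
    have huU : u ≤ C + 1 := by
      have hlp : lam ^ p ≤ 1 := Real.rpow_le_one hlam0.le hlam1.le hp0
      nlinarith
    have hconv : (1 + u) ^ p ≤ 1 + K * u := by
      have := one_add_rpow_le hp.le (show (0 : ℝ) < C + 1 by linarith) hu0.le huU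
      have h22 : (1 : ℝ) + (C + 1) = C + 2 := by ring
      rw [h22] at this
      rwa [hKdef]
    have h6 : ‖y‖ ^ p * lam ^ p = σ ^ p := by
      rw [← Real.mul_rpow (norm_nonneg y) hlam0.le]
      congr 1
      rw [hlamdef]
      field_simp
    have hfin : ‖y + A x‖ ^ p ≤ ‖y‖ ^ p + K * C * σ ^ p + K * ‖y‖ ^ p * ε := by
      have h3 : ‖y + A x‖ ^ p ≤ (‖y‖ * (1 + u)) ^ p :=
        Real.rpow_le_rpow (norm_nonneg _) haux hp0
      have h4 : (‖y‖ * (1 + u)) ^ p = ‖y‖ ^ p * (1 + u) ^ p :=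
        Real.mul_rpow (norm_nonneg y) (by linarith)
      have h5 : ‖y‖ ^ p * (1 + u) ^ p ≤ ‖y‖ ^ p * (1 + K * u) :=
        mul_le_mul_of_nonneg_left hconv hyp0.le
      have h7 : ‖y‖ ^ p * (1 + K * u)
          = ‖y‖ ^ p + K * C * (‖y‖ ^ p * lam ^ p) + K * ‖y‖ ^ p * ε := by
        rw [hudef]; ring
      rw [h6] at h7
      linarith
    have hmem : ‖y + A x‖ ^ p ∈
        {c : ℝ | ∃ t ∈ B, ∃ x ∈ branchHull B g t, c = ‖y + A x‖ ^ p} :=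
      ⟨t, ht, x, hx, rfl⟩
    have hs := csInf_le hbddT hmem
    have hKC : K * C * σ ^ p ≤ max ((1 + ‖A‖) ^ p) (((C + 2) ^ p - 1) / (C + 1) * C) * σ ^ p := by
      apply mul_le_mul_of_nonneg_right _ hσp.le
      rw [hKdef]
      exact le_max_right _ _
    linarith

end Statement6Aux

/-- Let `ξ` be an ordinal, `A : X → Y` an operator between Banach
spaces, and `1 < p < ∞`.  Then `A` is ξ-asymptotically uniformly smooth with power type
`p` iff `t_{ξ,p}(A) < ∞` (i.e. some constant `C > 0` works).  Moreover, in this case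
each of `t_{ξ,p}(A)` and `sup_{σ∈(0,1)} ρ_ξ(σ;A)/σ^p` can be majorized by a quantity
depending only on the other, `p`, and `‖A‖`. -/
theorem statement6 {X Y : Type u}
    [NormedAddCommGroup X] [NormedSpace ℝ X] [CompleteSpace X]
    [NormedAddCommGroup Y] [NormedSpace ℝ Y] [CompleteSpace Y]
    (ξ : Ordinal.{0}) (A : X →L[ℝ] Y) (p : ℝ) (hp : 1 < p) :
    ((∃ C : ℝ, ∀ σ : ℝ, 0 < σ → σ ≤ 1 → rho ξ A σ ≤ C * σ ^ p) ↔
      (tConstSet ξ A p).Nonempty) ∧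
    ∃ F G : ℝ → ℝ → ℝ → ℝ, ∀ B : X →L[ℝ] Y, (tConstSet ξ B p).Nonempty →
      sInf (tConstSet ξ B p) ≤
        F (sSup {r : ℝ | ∃ σ : ℝ, 0 < σ ∧ σ < 1 ∧ r = rho ξ B σ / σ ^ p}) p ‖B‖ ∧
      sSup {r : ℝ | ∃ σ : ℝ, 0 < σ ∧ σ < 1 ∧ r = rho ξ B σ / σ ^ p} ≤
        G (sInf (tConstSet ξ B p)) p ‖B‖ := by
  constructor
  · constructor
    · rintro ⟨C0, hC0⟩
      refine ⟨_, key_mem_tConstSet ξ A hp (le_max_right C0 1) fun σ hσ0 hσ1 => ?_⟩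
      refine (hC0 σ hσ0 hσ1.le).trans ?_
      exact mul_le_mul_of_nonneg_right (le_max_left C0 1) (Real.rpow_pos_of_pos hσ0 p).le
    · rintro ⟨C, hC⟩
      exact ⟨C, fun σ hσ0 _ => rho_le_of_tConst hp hC hσ0⟩
  · refine ⟨fun s q n => max ((1 + n) ^ q) (((max s 1 + 2) ^ q - 1) / (max s 1 + 1) * max s 1),
      fun a _ _ => a, fun B hB => ?_⟩
    obtain ⟨C0, hC0⟩ := hB
    have hub : ∀ r ∈ {r : ℝ | ∃ σ : ℝ, 0 < σ ∧ σ < 1 ∧ r = rho ξ B σ / σ ^ p},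
        ∀ C ∈ tConstSet ξ B p, r ≤ C := by
      rintro r ⟨σ, hσ0, hσ1, rfl⟩ C hC
      rw [div_le_iff₀ (Real.rpow_pos_of_pos hσ0 p)]
      exact rho_le_of_tConst hp hC hσ0
    constructor
    · set s := sSup {r : ℝ | ∃ σ : ℝ, 0 < σ ∧ σ < 1 ∧ r = rho ξ B σ / σ ^ p} with hsdef
      have hbdd : BddAbove {r : ℝ | ∃ σ : ℝ, 0 < σ ∧ σ < 1 ∧ r = rho ξ B σ / σ ^ p} :=
        ⟨C0, fun r hr => hub r hr C0 hC0⟩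
      have hrho : ∀ σ : ℝ, 0 < σ → σ < 1 → rho ξ B σ ≤ max s 1 * σ ^ p := by
        intro σ h0 h1
        have hσp : (0 : ℝ) < σ ^ p := Real.rpow_pos_of_pos h0 p
        have hle : rho ξ B σ / σ ^ p ≤ s := le_csSup hbdd ⟨σ, h0, h1, rfl⟩
        calc rho ξ B σ ≤ s * σ ^ p := by rwa [← div_le_iff₀ hσp]
          _ ≤ max s 1 * σ ^ p := mul_le_mul_of_nonneg_right (le_max_left _ _) hσp.le
      exact csInf_le ⟨0, fun C hC => hC.1.le⟩ (key_mem_tConstSet ξ B hp (le_max_right s 1) hrho)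
    · refine Real.sSup_le (fun r hr => le_csInf ⟨C0, hC0⟩ (fun C hC => hub r hr C hC)) ?_
      exact le_csInf ⟨C0, hC0⟩ (fun C hC => hC.1.le)

end SzlenkPaper
end
end

section
/- Let X be a Banach space, K ⊆ X* a nonempty weak*-compact set, and σ, ε, a > 0 with a/σ > ε. Let (x_λ)_{λ∈D} ⊆ σB_X be a weakly null net and (x*_λ)_{λ∈D} ⊆ K a net such that Re x*_λ(x_λ) ≥ a for every λ. Then every weak*-cluster point of (x*_λ)_{λ∈D} lies in s_ε(K). -/
/-!
Common definitions formalizing the notions of Causey, "Power type ξ-asymptotically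
uniformly smooth norms": Szlenk derivations and indices, B-trees, weakly null and
weak*-null collections, the moduli ρ_ξ and δ_ξ^{w*}, the trees Γ_ξ, Γ_{ξ,n}, Γ_{ξ,∞}
with their levels and probability weights, and related quantities.
-/

noncomputable section

open Ordinal Set Metric Filter NormedSpace Pointwise
open scoped Classical ENNReal Topology

universe u v

namespace SzlenkPaper

/-- Let `X` be a Banach space, `K ⊆ X*` a nonempty weak*-compact set,
and `σ, ε, a > 0` with `a/σ > ε`.  Let `(x_λ)_{λ∈D} ⊆ σB_X` be a weakly null net and
`(x*_λ)_{λ∈D} ⊆ K` a net with `x*_λ(x_λ) ≥ a` for every `λ`.  Then every weak*-cluster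
point of `(x*_λ)` lies in `s_ε(K)`. -/
theorem statement9 {X : Type u}
    [NormedAddCommGroup X] [NormedSpace ℝ X] [CompleteSpace X]
    (K : Set (StrongDual ℝ X)) (hK : IsWStarCompact K) (hKne : K.Nonempty)
    (σ ε a : ℝ) (hσ : 0 < σ) (hε : 0 < ε) (ha : 0 < a) (haσ : ε < a / σ)
    (D : Type v) [Preorder D] [IsDirected D (· ≤ ·)] [Nonempty D]
    (x : D → X) (hx : ∀ d, ‖x d‖ ≤ σ)
    (hwn : Filter.Tendsto x Filter.atTop (weakNhds (0 : X)))
    (xs : D → StrongDual ℝ X) (hxs : ∀ d, xs d ∈ K)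
    (hlb : ∀ d, a ≤ xs d (x d)) :
    ∀ f : StrongDual ℝ X, (wstarNhds f ⊓ Filter.map xs Filter.atTop).NeBot →
      f ∈ szDeriv ε K := by
  classical
  intro f hf
  -- evaluation of `f` along the weakly null net tends to 0
  have hfx : Tendsto (fun d => f (x d)) atTop (𝓝 0) := by
    rw [weakNhds, tendsto_comap_iff] at hwn
    have hc : Continuous fun y : WeakSpace ℝ X => (topDualPairing ℝ X).flip y f :=
      WeakBilin.eval_continuous _ f
    have := (hc.tendsto (toWeakSpace ℝ X 0)).comp hwn
    have h0 : ((topDualPairing ℝ X).flip ((toWeakSpace ℝ X) 0)) f = 0 := map_zero f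
    rw [h0] at this
    exact this
  -- K is norm-bounded, by Banach–Steinhaus
  have hKb : Bornology.IsBounded K := by
    have hpt : ∀ z : X, ∃ C : ℝ, ∀ k : K, ‖(k : StrongDual ℝ X) z‖ ≤ C := by
      intro z
      have hc : Continuous fun g : WeakDual ℝ X => g z := WeakDual.eval_continuous z
      obtain ⟨C, hC⟩ := isBounded_iff_forall_norm_le.mp (hK.image hc).isBounded
      exact ⟨C, fun k => hC _ ⟨StrongDual.toWeakDual (k : StrongDual ℝ X), ⟨(k : StrongDual ℝ X), k.2, rfl⟩, rfl⟩⟩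
    obtain ⟨C', hC'⟩ := banach_steinhaus (ι := K) (g := fun k : K => (k : StrongDual ℝ X)) hpt
    exact (Metric.isBounded_closedBall (x := (0 : StrongDual ℝ X)) (r := C')).subset
      fun k hk => mem_closedBall_zero_iff.mpr (hC' ⟨k, hk⟩)
  -- extracting members of the net from the cluster filter
  have hclust : ∀ V ∈ wstarNhds f, ∀ S ∈ (atTop : Filter D), ∃ d ∈ S, xs d ∈ V := by
    intro V hV S hS
    have h1 : V ∈ wstarNhds f ⊓ Filter.map xs atTop := Filter.mem_inf_of_left hV
    have h2 : xs '' S ∈ wstarNhds f ⊓ Filter.map xs atTop :=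
      Filter.mem_inf_of_right (Filter.image_mem_map hS)
    obtain ⟨g, hgV, hgS⟩ := Filter.nonempty_of_mem (Filter.inter_mem h1 h2)
    obtain ⟨d, hd, rfl⟩ := hgS
    exact ⟨d, hd, hgV⟩
  -- every member of the weak* neighborhood filter of `f` contains `f`
  have hfV : ∀ V ∈ wstarNhds f, f ∈ V := by
    intro V hV
    rw [wstarNhds, Filter.mem_comap] at hV
    obtain ⟨U, hU, hUV⟩ := hV
    exact hUV (mem_of_mem_nhds (X := WeakDual ℝ X) hU)
  -- f belongs to K
  have hfK : f ∈ K := by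
    have hcl : IsClosed (⇑(StrongDual.toWeakDual (𝕜 := ℝ) (E := X)) '' K) := hK.isClosed
    have hmap : (Filter.map (⇑(StrongDual.toWeakDual (𝕜 := ℝ) (E := X)))
        (wstarNhds f ⊓ Filter.map xs atTop)).NeBot := hf.map _
    have hle : Filter.map (⇑(StrongDual.toWeakDual (𝕜 := ℝ) (E := X)))
        (wstarNhds f ⊓ Filter.map xs atTop) ≤
        𝓝 (StrongDual.toWeakDual f) ⊓ 𝓟 (⇑(StrongDual.toWeakDual (𝕜 := ℝ) (E := X)) '' K) := by
      refine le_inf ?_ ?_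
      · exact (Filter.map_mono inf_le_left).trans Filter.map_comap_le
      · refine (Filter.map_mono inf_le_right).trans ?_
        rw [Filter.map_map]
        refine Filter.le_principal_iff.mpr (Filter.mem_map.mpr ?_)
        exact Filter.univ_mem' fun d => ⟨xs d, hxs d, rfl⟩
    have hcp : ClusterPt (StrongDual.toWeakDual f) (𝓟 (⇑(StrongDual.toWeakDual (𝕜 := ℝ) (E := X)) '' K)) :=
      hmap.mono hle
    have hmem := mem_closure_iff_clusterPt.mpr hcp
    rw [hcl.closure_eq] at hmem
    obtain ⟨g, hg, hge⟩ := hmem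
    rwa [← (StrongDual.toWeakDual (𝕜 := ℝ) (E := X)).injective hge]
  rw [szDeriv, if_neg (not_le.mpr hε)]
  refine ⟨hfK, fun V hV => ?_⟩
  have hεσa : ε * σ < a := (lt_div_iff₀ hσ).mp haσ
  set δ : ℝ := (a - ε * σ) / 2 with hδdef
  have hδ : 0 < δ := by rw [hδdef]; linarith
  have hS : {d : D | |f (x d)| < δ} ∈ (atTop : Filter D) := by
    have h := hfx (Metric.ball_mem_nhds (0 : ℝ) hδ)
    simpa [Real.dist_eq] using h
  obtain ⟨d, hd, hdV⟩ := hclust V hV _ hS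
  have h3 : a - δ ≤ (xs d - f) (x d) := by
    have hd' : |f (x d)| < δ := hd
    have habs := abs_lt.mp hd'
    have hsub : (xs d - f) (x d) = xs d (x d) - f (x d) := by
      simp [ContinuousLinearMap.sub_apply]
    have := hlb d
    rw [hsub]
    linarith [habs.2]
  have key : a - δ ≤ ‖xs d - f‖ * σ :=
    calc a - δ ≤ (xs d - f) (x d) := h3
    _ ≤ ‖(xs d - f) (x d)‖ := le_abs_self _
    _ ≤ ‖xs d - f‖ * ‖x d‖ := (xs d - f).le_opNorm _
    _ ≤ ‖xs d - f‖ * σ := mul_le_mul_of_nonneg_left (hx d) (norm_nonneg _)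
  have hdist : ε < dist (xs d) f := by
    rw [dist_eq_norm]
    have h5 : ε * σ < ‖xs d - f‖ * σ := by
      have : ε * σ < a - δ := by rw [hδdef]; linarith
      linarith
    exact lt_of_mul_lt_mul_right h5 hσ.le
  have hbV : Bornology.IsBounded (V ∩ K) := hKb.subset inter_subset_right
  exact lt_of_lt_of_le hdist (dist_le_diam_of_mem hbV ⟨hdV, hxs d⟩ ⟨hfV V hV, hfK⟩)


end SzlenkPaper
end
end
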